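/- There exist a constant C > 0 and an integer k₀ such that for every integer q ≥ 2, every integer k ≥ k₀, and every word w of length k over an alphabet of q letters, the unique real root α_m of the recurrence polynomial P_w in the interval (q − q^{-(k-2)}, q) satisfies |(q − α_m) − 1/A_w(q) − A_w'(q)/A_w(q)³| ≤ C·k²·q^{-3k+5}, where A_w' denotes the derivative of A_w; the constant C does not depend on k, q, or the autocorrelation of w. -/

import Mathlib

/-- The `i`-th autocorrelation bit `b_i` of a word `w` (for `1 ≤ i ≤ w.length`):
`1` if the prefix of `w` of length `i` equals the suffix of `w` of length `i`, else `0`. -/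
def acorrBit {α : Type*} [DecidableEq α] (w : List α) (i : ℕ) : ℕ :=
  if w.take i = w.drop (w.length - i) then 1 else 0

/-- The inverse autocorrelation polynomial `A_w(x) = ∑_{i=1}^k b_i x^(i-1)`, over `ℝ`. -/
noncomputable def APolyR {α : Type*} [DecidableEq α] (w : List α) : Polynomial ℝ :=
  ∑ i ∈ Finset.range w.length, Polynomial.C (acorrBit w (i + 1) : ℝ) * Polynomial.X ^ i

/-- The inverse autocorrelation polynomial `A_w(x)`, over `ℂ`. -/
noncomputable def APolyC {α : Type*} [DecidableEq α] (w : List α) : Polynomial ℂ :=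
  ∑ i ∈ Finset.range w.length, Polynomial.C (acorrBit w (i + 1) : ℂ) * Polynomial.X ^ i

/-- The recurrence polynomial `P_w(x) = 1 + (x - q)·A_w(x)`, over `ℝ`. -/
noncomputable def PPolyR (q : ℕ) {α : Type*} [DecidableEq α] (w : List α) : Polynomial ℝ :=
  1 + (Polynomial.X - Polynomial.C (q : ℝ)) * APolyR w

/-- The recurrence polynomial `P_w(x) = 1 + (x - q)·A_w(x)`, over `ℂ`. -/
noncomputable def PPolyC (q : ℕ) {α : Type*} [DecidableEq α] (w : List α) : Polynomial ℂ :=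
  1 + (Polynomial.X - Polynomial.C (q : ℂ)) * APolyC w

/-- `h_w(n)`: the number of words of length `n` over `Fin q` whose last `w.length` letters
equal `w` and which contain no other occurrence of `w` as consecutive letters. -/
noncomputable def hitCount (q : ℕ) (w : List (Fin q)) (n : ℕ) : ℕ :=
  Nat.card {l : List (Fin q) // l.length = n ∧ l.drop (n - w.length) = w ∧
    ∀ p < n - w.length, (l.drop p).take w.length ≠ w}

/-- The first hitting probability `P_h(w,n) = h_w(n+k)/q^(n+k)` where `k = w.length`. -/
noncomputable def hitProb (q : ℕ) (w : List (Fin q)) (n : ℕ) : ℝ :=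
  (hitCount q w (n + w.length) : ℝ) / (q : ℝ) ^ (n + w.length)

/-- The constant `C_{w/w'} = ln(1+r)/r` with `r = (A_w(q) − A_{w'}(q))/A_{w'}(q)`. -/
noncomputable def Crat (q : ℕ) (w w' : List (Fin q)) : ℝ :=
  Real.log (1 + ((APolyR w).eval (q : ℝ) - (APolyR w').eval (q : ℝ)) / (APolyR w').eval (q : ℝ)) /
    (((APolyR w).eval (q : ℝ) - (APolyR w').eval (q : ℝ)) / (APolyR w').eval (q : ℝ))

/-- The partial-fraction coefficient `c_w = 1/P_w'(α_m)`. -/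
noncomputable def cwCoef (q : ℕ) (w : List (Fin q)) (αm : ℝ) : ℝ :=
  1 / ((PPolyR q w).derivative.eval αm)

lemma bern_up (t : ℝ) (h0 : 0 ≤ t) (h1 : t ≤ 1) (n : ℕ) :
    (1-t)^n ≤ 1 - n*t + n^2*t^2 := by
  induction n with
  | zero => simp
  | succ n ih =>
    have h2 : (0:ℝ) ≤ 1 - t := by linarith
    have h3 : (1-t)^(n+1) = (1-t)*(1-t)^n := by ring
    rw [h3]
    have h4 : (1-t)*(1-t)^n ≤ (1-t)*(1 - n*t + n^2*t^2) :=
      mul_le_mul_of_nonneg_left ih h2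
    refine h4.trans ?_
    push_cast
    nlinarith [sq_nonneg ((n:ℝ)*t), mul_nonneg (mul_nonneg (sq_nonneg (n:ℝ)) h0) h0]

lemma term_low (qr e : ℝ) (hq : 2 ≤ qr) (he0 : 0 ≤ e) (he1 : e ≤ 1) (i : ℕ) :
    qr^i - i*e*qr^(i-1) ≤ (qr-e)^i := by
  rcases i with _ | j
  · simp
  · have hq0 : (0:ℝ) < qr := by linarith
    have ht1 : e/qr ≤ 1 := by
      rw [div_le_one hq0]; linarith
    have hb : 1 + (j+1 : ℕ) * (-(e/qr)) ≤ (1 + (-(e/qr)))^(j+1) :=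
      one_add_mul_le_pow (by nlinarith [div_nonneg he0 hq0.le]) (j+1)
    have hfact : qr - e = qr * (1 - e/qr) := by field_simp
    have hmul := mul_le_mul_of_nonneg_left hb (le_of_lt (pow_pos hq0 (j+1)))
    rw [hfact, mul_pow]
    calc qr^(j+1) - (j+1:ℕ)*e*qr^((j+1)-1)
        = qr^(j+1) * (1 + (j+1:ℕ) * (-(e/qr))) := by
          push_cast
          field_simp
          ring
      _ ≤ qr^(j+1) * (1 + (-(e/qr)))^(j+1) := hmul
      _ = qr^(j+1) * (1 - e/qr)^(j+1) := by ring_nf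

lemma term_up (qr e : ℝ) (hq : 2 ≤ qr) (he0 : 0 ≤ e) (he1 : e ≤ 1) (i : ℕ) :
    (qr-e)^i ≤ qr^i - i*e*qr^(i-1) + i^2*e^2*qr^i/qr^2 := by
  rcases i with _ | j
  · simp
  · have hq0 : (0:ℝ) < qr := by linarith
    have ht1 : e/qr ≤ 1 := by rw [div_le_one hq0]; linarith
    have ht0 : 0 ≤ e/qr := div_nonneg he0 hq0.le
    have hb := bern_up (e/qr) ht0 ht1 (j+1)
    have hfact : qr - e = qr * (1 - e/qr) := by field_simp
    have hmul := mul_le_mul_of_nonneg_left hb (le_of_lt (pow_pos hq0 (j+1)))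
    rw [hfact, mul_pow]
    refine hmul.trans (le_of_eq ?_)
    push_cast
    field_simp
    ring

/-- the final arithmetic, with all quantities as opaque real variables -/
lemma endgame (qr e S Dv B R k' : ℝ) (hq2 : 2 ≤ qr) (he : 0 < e) (hk0 : 0 ≤ k')
    (hke : k' * e ≤ qr) (hS : 0 < S) (heb : e*B = 1) (hBS : B ≤ S)
    (hD0 : 0 ≤ Dv) (hDub : Dv ≤ k'*S/qr) (hR : R = B - S + e*Dv)
    (hR0 : 0 ≤ R) (hRub : R ≤ e^2*k'^2/qr^2*S) :
    |e - 1/S - Dv/S^3| ≤ 5*e^3*k'^2/qr^2 := by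
  have hq0 : (0:ℝ) < qr := by linarith
  have hExpr : e - 1/S - Dv/S^3
      = (Dv/S)*(e - 1/S)*(e + 1/S) - e*R/S := by
    linear_combination (e/S) * hR + (1/S) * heb - e * (mul_inv_cancel₀ (ne_of_gt hS))
  have hA : e - 1/S = e*(e*Dv - R)/S := by
    linear_combination (e/S) * hR + (1/S) * heb - e * (mul_inv_cancel₀ (ne_of_gt hS))
  have h1s_le_e : 1/S ≤ e := by
    rw [div_le_iff₀ hS]
    nlinarith [mul_le_mul_of_nonneg_left hBS he.le]
  have h1s_pos : 0 < 1/S := by positivity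
  have habs : |e*Dv - R| ≤ 2*(e*k'*S/qr) := by
    have h1 : e*Dv ≤ e*(k'*S/qr) := mul_le_mul_of_nonneg_left hDub he.le
    have h1' : e*(k'*S/qr) = e*k'*S/qr := by ring
    have h2 : R ≤ e*k'*S/qr := by
      refine hRub.trans ?_
      rw [show e^2*k'^2/qr^2*S = e^2*k'^2*S/qr^2 by ring,
        div_le_div_iff₀ (by positivity) hq0]
      linarith [mul_le_mul_of_nonneg_right hke
          (mul_nonneg (mul_nonneg (mul_nonneg he.le hk0) hS.le) hq0.le)]
    have hpos : (0:ℝ) ≤ e*k'*S/qr := by positivity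
    rw [abs_le]
    constructor
    · nlinarith [mul_nonneg he.le hD0, h1, h1', h2, hR0, hpos]
    · nlinarith [mul_nonneg he.le hD0, h1, h1', h2, hR0, hpos]
  have heA : |e - 1/S| ≤ 2*e^2*k'/qr := by
    rw [hA, abs_div, abs_of_pos hS, abs_mul, abs_of_pos he]
    rw [div_le_iff₀ hS]
    calc e * |e*Dv - R| ≤ e * (2*(e*k'*S/qr)) := mul_le_mul_of_nonneg_left habs he.le
      _ = 2*e^2*k'/qr * S := by field_simp
  have hDS : Dv/S ≤ k'/qr := by
    rw [div_le_div_iff₀ hS hq0]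
    calc Dv * qr ≤ (k'*S/qr) * qr := mul_le_mul_of_nonneg_right hDub hq0.le
      _ = k' * S := by field_simp
  have hDS0 : 0 ≤ Dv/S := by positivity
  have hsum2e : e + 1/S ≤ 2*e := by linarith
  rw [hExpr]
  have h1 : |(Dv/S)*(e - 1/S)*(e + 1/S)| ≤ (k'/qr)*(2*e^2*k'/qr)*(2*e) := by
    rw [abs_mul, abs_mul, abs_of_nonneg hDS0, abs_of_pos (by linarith : (0:ℝ) < e + 1/S)]
    have b1 : (Dv/S) * |e - 1/S| ≤ (k'/qr) * (2*e^2*k'/qr) :=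
      mul_le_mul hDS heA (abs_nonneg _) (by positivity)
    exact mul_le_mul b1 hsum2e (by linarith) (by positivity)
  have h2 : |e*R/S| ≤ e^3*k'^2/qr^2 := by
    rw [abs_div, abs_of_pos hS, abs_mul, abs_of_pos he, abs_of_nonneg hR0]
    rw [div_le_iff₀ hS]
    calc e * R ≤ e * (e^2*k'^2/qr^2*S) := mul_le_mul_of_nonneg_left hRub he.le
      _ = e^3*k'^2/qr^2 * S := by ring
  calc |(Dv/S)*(e - 1/S)*(e + 1/S) - e*R/S|
      ≤ |(Dv/S)*(e - 1/S)*(e + 1/S)| + |e*R/S| := abs_sub _ _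
    _ ≤ (k'/qr)*(2*e^2*k'/qr)*(2*e) + e^3*k'^2/qr^2 := by linarith
    _ = 5*e^3*k'^2/qr^2 := by field_simp; ring

/-- There are `C > 0` and `k₀` such that for all `q ≥ 2`, `k ≥ k₀` and words
`w` of length `k`, the real root `α_m` of `P_w` in `(q − q^{-(k-2)}, q)` satisfies
`|(q − α_m) − 1/A_w(q) − A_w'(q)/A_w(q)³| ≤ C·k²·q^(−3k+5)`. -/
theorem stmt9 :
    ∃ C : ℝ, 0 < C ∧ ∃ k₀ : ℕ, ∀ (q k : ℕ), 2 ≤ q → k₀ ≤ k →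
      ∀ w : List (Fin q), w.length = k →
        ∀ αm : ℝ, αm ∈ Set.Ioo ((q : ℝ) - (q : ℝ) ^ (-((k : ℤ) - 2))) (q : ℝ) →
          (PPolyR q w).IsRoot αm →
          |((q : ℝ) - αm) - 1 / (APolyR w).eval (q : ℝ) -
              ((APolyR w).derivative.eval (q : ℝ)) / ((APolyR w).eval (q : ℝ)) ^ 3| ≤
            C * (k : ℝ) ^ 2 * (q : ℝ) ^ (-3 * (k : ℤ) + 5) := by
  refine ⟨5, by norm_num, 3, ?_⟩
  intro q k hq hk w hw αm hmem hroot
  set qr : ℝ := (q : ℝ) with hqr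
  have hq2 : (2:ℝ) ≤ qr := by rw [hqr]; exact_mod_cast hq
  have hq0 : (0:ℝ) < qr := by linarith
  have hq1 : (1:ℝ) ≤ qr := by linarith
  set e : ℝ := qr - αm with he_def
  set a : ℕ → ℝ := fun i => (acorrBit w (i+1) : ℝ) with ha_def
  have ha0 : ∀ i, 0 ≤ a i := fun i => by simp only [ha_def]; positivity
  have ha1 : ∀ i, a i ≤ 1 := by
    intro i; simp only [ha_def, acorrBit]; split <;> norm_num
  have he_pos : 0 < e := by
    have := hmem.2; simp only [he_def]; linarith
  have hk2 : 2 ≤ k := by omega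
  have heta : (qr : ℝ) ^ (-((k : ℤ) - 2)) = (qr ^ (k-2 : ℕ))⁻¹ := by
    have h1 : -((k : ℤ) - 2) = -((k - 2 : ℕ) : ℤ) := by
      push_cast [Nat.cast_sub hk2]; ring
    rw [h1, zpow_neg, zpow_natCast]
  have hqk2_pos : (0:ℝ) < qr ^ (k-2:ℕ) := pow_pos hq0 _
  have hE : e * qr ^ (k-2 : ℕ) ≤ 1 := by
    have h2 := hmem.1
    rw [heta] at h2
    have h3 : e < (qr ^ (k-2 : ℕ))⁻¹ := by simp only [he_def]; linarith
    calc e * qr ^ (k-2:ℕ) ≤ (qr ^ (k-2:ℕ))⁻¹ * qr ^ (k-2:ℕ) :=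
          mul_le_mul_of_nonneg_right h3.le hqk2_pos.le
      _ = 1 := inv_mul_cancel₀ (ne_of_gt hqk2_pos)
  have hqk2 : (1:ℝ) ≤ qr ^ (k-2:ℕ) := one_le_pow₀ hq1
  have he1 : e ≤ 1 := by
    linarith [mul_le_mul_of_nonneg_left hqk2 he_pos.le, hE]
  -- k * e ≤ qr
  have hkpow : (k:ℝ) ≤ qr ^ (k-1 : ℕ) := by
    have h1 : k - 1 < 2 ^ (k-1) := Nat.lt_two_pow_self (n := k-1)
    have h2 : (k:ℝ) ≤ (2:ℝ) ^ (k-1:ℕ) := by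
      have : k ≤ 2 ^ (k-1) := by omega
      exact_mod_cast this
    exact h2.trans (pow_le_pow_left₀ (by norm_num) hq2 _)
  have hke : (k:ℝ) * e ≤ qr := by
    have h1 : (k:ℝ) * e * qr ^ (k-2:ℕ) ≤ (k:ℝ) := by
      linarith [mul_le_mul_of_nonneg_left hE (Nat.cast_nonneg (α := ℝ) k)]
    have hx : qr^(k-1:ℕ) = qr*qr^(k-2:ℕ) := by
      rw [show k-1 = (k-2)+1 by omega, pow_succ']
    have h2 : (k:ℝ) ≤ qr * qr^(k-2:ℕ) := by rw [← hx]; exact hkpow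
    by_contra hcon
    push_neg at hcon
    have h5 := mul_lt_mul_of_pos_right hcon hqk2_pos
    linarith
  -- sums
  set S : ℝ := ∑ i ∈ Finset.range k, a i * qr^i with hS_def
  set Dv : ℝ := ∑ i ∈ Finset.range k, a i * ((i:ℝ) * qr^(i-1)) with hD_def
  set B : ℝ := ∑ i ∈ Finset.range k, a i * (qr - e)^i with hB_def
  have hSeval : (APolyR w).eval qr = S := by
    rw [hS_def]
    simp [APolyR, Polynomial.eval_finset_sum, hw, ha_def]
  have hDeval : (APolyR w).derivative.eval qr = Dv := by
    rw [hD_def]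
    simp [APolyR, Polynomial.derivative_sum, Polynomial.derivative_C_mul,
      Polynomial.derivative_X_pow, Polynomial.eval_finset_sum, hw, ha_def]
  have hαm : αm = qr - e := by rw [he_def]; ring
  have hBeval : (APolyR w).eval αm = B := by
    rw [hαm, hB_def]
    simp [APolyR, Polynomial.eval_finset_sum, hw, ha_def]
  -- root equation : e * B = 1
  have heb : e * B = 1 := by
    have h0 : (PPolyR q w).eval αm = 0 := hroot
    simp only [PPolyR, Polynomial.eval_add, Polynomial.eval_one, Polynomial.eval_mul,
      Polynomial.eval_sub, Polynomial.eval_X, Polynomial.eval_C] at h0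
    rw [← hqr, hBeval] at h0
    linear_combination B*he_def - h0
  have hB_pos : 0 < B := by
    by_contra hc
    push_neg at hc
    linarith [mul_nonpos_of_nonneg_of_nonpos he_pos.le hc, heb]
  -- S lower bound
  have hak : a (k-1) = 1 := by
    have h1 : (k-1) + 1 = k := by omega
    have h2 : w.take k = w := by rw [← hw]; exact List.take_length
    simp only [ha_def, h1, acorrBit, hw]
    rw [if_pos]
    · norm_num
    · rw [h2]; simp
  have hS_lb : qr ^ (k-1:ℕ) ≤ S := by
    have h := Finset.single_le_sum (f := fun i => a i * qr^i)
      (fun i _ => mul_nonneg (ha0 i) (le_of_lt (pow_pos hq0 i)))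
      (Finset.mem_range.2 (by omega : k - 1 < k))
    simp only [hak, one_mul] at h
    exact h
  have hS_pos : 0 < S := lt_of_lt_of_le (pow_pos hq0 _) hS_lb
  -- Dv bounds
  have hD0 : 0 ≤ Dv := by
    apply Finset.sum_nonneg
    intro i _
    exact mul_nonneg (ha0 i) (mul_nonneg (Nat.cast_nonneg i) (le_of_lt (pow_pos hq0 _)))
  have hterm : ∀ i, i < k → (i:ℝ)*qr^(i-1) ≤ (k:ℝ)*qr^i/qr := by
    intro i hik
    rcases i with _ | j
    · simp
      positivity
    · have h1 : ((j:ℝ)+1) ≤ (k:ℝ) := by exact_mod_cast hik.le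
      have h2 : qr^(j+1-1) = qr^j := by norm_num
      have h3 : (k:ℝ)*qr^(j+1)/qr = (k:ℝ)*qr^j := by
        rw [pow_succ]; field_simp
      rw [h2, h3]
      push_cast
      exact mul_le_mul_of_nonneg_right h1 (by positivity)
  have hD_ub : Dv ≤ (k:ℝ) * S / qr := by
    rw [hD_def, hS_def, Finset.mul_sum, Finset.sum_div]
    apply Finset.sum_le_sum
    intro i hi
    have h4 := mul_le_mul_of_nonneg_left (hterm i (Finset.mem_range.1 hi)) (ha0 i)
    refine h4.trans (le_of_eq (by ring))
  -- B ≤ S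
  have hqe_pos : (0:ℝ) ≤ qr - e := by linarith
  have hB_le_S : B ≤ S := by
    apply Finset.sum_le_sum
    intro i _
    exact mul_le_mul_of_nonneg_left (pow_le_pow_left₀ hqe_pos (by linarith) i) (ha0 i)
  -- Taylor sandwich
  set R : ℝ := B - S + e * Dv with hR_def
  have hR0 : 0 ≤ R := by
    have h1 : S - e * Dv ≤ B := by
      rw [hS_def, hD_def, hB_def, Finset.mul_sum, ← Finset.sum_sub_distrib]
      apply Finset.sum_le_sum
      intro i _
      have ht := term_low qr e hq2 he_pos.le he1 i
      have h := mul_le_mul_of_nonneg_left ht (ha0 i)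
      have hz : a i * (qr^i - (i:ℝ)*e*qr^(i-1))
          = a i*qr^i - e*(a i*((i:ℝ)*qr^(i-1))) := by ring
      linarith [h, hz]
    rw [hR_def]; linarith
  have hR_ub : R ≤ e^2 * (k:ℝ)^2 / qr^2 * S := by
    have h2 : B ≤ ∑ i ∈ Finset.range k,
        (a i * qr^i - e * (a i * ((i:ℝ) * qr^(i-1)))
          + e^2*(k:ℝ)^2/qr^2 * (a i * qr^i)) := by
      rw [hB_def]
      apply Finset.sum_le_sum
      intro i hi
      have hik : (i:ℝ) ≤ (k:ℝ) := by
        have := (Finset.mem_range.1 hi).le; exact_mod_cast this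
      have hi0 : (0:ℝ) ≤ (i:ℝ) := Nat.cast_nonneg i
      have ht := term_up qr e hq2 he_pos.le he1 i
      have h3 := mul_le_mul_of_nonneg_left ht (ha0 i)
      have h4 : (i:ℝ)^2 ≤ (k:ℝ)^2 := pow_le_pow_left₀ hi0 hik 2
      have h5 : a i * ((i:ℝ)^2*e^2*qr^i/qr^2) ≤ e^2*(k:ℝ)^2/qr^2 * (a i * qr^i) := by
        have hx : a i * ((i:ℝ)^2*e^2*qr^i/qr^2) = (i:ℝ)^2 * (a i * e^2 * qr^i / qr^2) := by
          ring
        have hy : e^2*(k:ℝ)^2/qr^2 * (a i * qr^i) = (k:ℝ)^2 * (a i * e^2 * qr^i / qr^2) := by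
          ring
        rw [hx, hy]
        exact mul_le_mul_of_nonneg_right h4 (by positivity)
      refine h3.trans ?_
      have hz : a i * (qr^i - (i:ℝ)*e*qr^(i-1) + (i:ℝ)^2*e^2*qr^i/qr^2)
          = a i * qr^i - e*(a i*((i:ℝ)*qr^(i-1))) + a i*((i:ℝ)^2*e^2*qr^i/qr^2) := by ring
      linarith [hz, h5]
    rw [Finset.sum_add_distrib, Finset.sum_sub_distrib,
      ← Finset.mul_sum, ← Finset.mul_sum, ← hS_def, ← hD_def] at h2
    rw [hR_def]; linarith
  -- endgame
  have hmain := endgame qr e S Dv B R (k:ℝ) hq2 he_pos (Nat.cast_nonneg k) hke hS_pos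
    heb hB_le_S hD0 hD_ub hR_def hR0 hR_ub
  -- final comparison
  have hzp : (qr : ℝ) ^ (-3 * (k:ℤ) + 5) = (qr ^ (3*k-5 : ℕ))⁻¹ := by
    have h1 : -3 * (k:ℤ) + 5 = -((3*k - 5 : ℕ) : ℤ) := by
      push_cast [Nat.cast_sub (by omega : 5 ≤ 3*k)]; ring
    rw [h1, zpow_neg, zpow_natCast]
  have hfin : 5 * e^3 * (k:ℝ)^2 / qr^2 ≤ 5 * (k:ℝ)^2 * (qr ^ (3*k-5:ℕ))⁻¹ := by
    have hp : (0:ℝ) < qr ^ (3*k-5:ℕ) := pow_pos hq0 _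
    have hc : e^3 * qr^((k-2)*3 : ℕ) ≤ 1 := by
      have h3 : (e * qr^(k-2:ℕ))^3 ≤ 1 :=
        pow_le_one₀ (mul_nonneg he_pos.le hqk2_pos.le) hE
      calc e^3 * qr^((k-2)*3:ℕ) = (e*qr^(k-2:ℕ))^3 := by rw [mul_pow, ← pow_mul]
        _ ≤ 1 := h3
    have key : e^3 * qr^(3*k-5:ℕ) ≤ qr^2 := by
      have h4 : (3*k-5 : ℕ) = (k-2)*3 + 1 := by omega
      rw [h4, pow_succ]
      calc e^3 * (qr^((k-2)*3:ℕ) * qr) = (e^3 * qr^((k-2)*3:ℕ)) * qr := by ring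
        _ ≤ 1 * qr := mul_le_mul_of_nonneg_right hc hq0.le
        _ ≤ qr^2 := by nlinarith
    have h6 : e^3 ≤ qr^2 / qr^(3*k-5:ℕ) := (le_div_iff₀ hp).mpr key
    rw [div_le_iff₀ (by positivity)]
    calc 5 * e^3 * (k:ℝ)^2 = 5 * (k:ℝ)^2 * (e^3) := by ring
      _ ≤ 5 * (k:ℝ)^2 * (qr^2 / qr^(3*k-5:ℕ)) :=
          mul_le_mul_of_nonneg_left h6 (by positivity)
      _ = 5 * (k:ℝ)^2 * (qr ^ (3*k-5:ℕ))⁻¹ * qr^2 := by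
          rw [div_eq_mul_inv]; ring
  rw [hSeval, hDeval, hzp]
  exact hmain.trans hfin
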